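/- Let d ≥ 1 and 0 < ε < 1/d. Let (x_n)_{n≥1} be a sequence in [0,1)^d whose discrepancy satisfies D_N(x_n) = o(N^{−(1−ε)}) as N → ∞, i.e. N^{1−ε} · D_N(x_n) → 0. Then (x_n) has converging number variance for the exponent α = (1−ε)/d with respect to ‖·‖_∞; that is, for every s > 0, lim_{N→∞} #{(l,m) : 1 ≤ l, m ≤ N, l ≠ m, ‖x_l − x_m‖_∞ ≤ s/N^{α}} / (N² · (2s/N^{α})^d) = 1. -/

import Mathlib

open scoped Classical

/-- Distance from `x` to the nearest integer. -/
noncomputable def nint (x : ℝ) : ℝ := ⨅ k : ℤ, |x - (k : ℝ)|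

/-- Maximum (sup) torus norm on `ℝ^d` built from the nearest-integer distance. -/
noncomputable def supNint {d : ℕ} (y : Fin d → ℝ) : ℝ := ⨆ i, nint (y i)

/-- Number of ordered pairs `(l,m)`, `1 ≤ l,m ≤ N`, `l ≠ m`, with
`‖x_l - x_m‖_∞ ≤ r`. -/
noncomputable def pairCount (d : ℕ) (x : ℕ → Fin d → ℝ) (N : ℕ) (r : ℝ) : ℕ :=
  (((Finset.Icc 1 N) ×ˢ (Finset.Icc 1 N)).filter
    (fun p => p.1 ≠ p.2 ∧ supNint (fun i => x p.1 i - x p.2 i) ≤ r)).card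

/-- Discrepancy of the first `N` points of `x` in `[0,1)^d`: supremum over all
axis-parallel boxes `[a,b) ⊆ [0,1)^d` of `|#{1 ≤ n ≤ N : x_n ∈ [a,b)}/N - vol [a,b)|`. -/
noncomputable def discrepancy (d N : ℕ) (x : ℕ → Fin d → ℝ) : ℝ :=
  sSup {v : ℝ | ∃ a b : Fin d → ℝ, (∀ i, 0 ≤ a i ∧ a i ≤ b i ∧ b i ≤ 1) ∧
    v = |(((Finset.Icc 1 N).filter (fun n => ∀ i, a i ≤ x n i ∧ x n i < b i)).card : ℝ) / N
      - ∏ i, (b i - a i)|}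


lemma nint_nonneg (x : ℝ) : 0 ≤ nint x :=
  le_ciInf fun k => abs_nonneg _

lemma nint_le (x : ℝ) (k : ℤ) : nint x ≤ |x - k| :=
  ciInf_le ⟨0, by rintro v ⟨k, rfl⟩; exact abs_nonneg _⟩ k

lemma nint_eq_round (x : ℝ) : nint x = |x - round x| := by
  refine le_antisymm (nint_le x _) (le_ciInf fun k => ?_)
  by_cases hk : k = round x
  · subst hk; rfl
  · have h1 : (1 : ℝ) ≤ |(round x : ℝ) - k| := by
      have := Int.one_le_abs (sub_ne_zero.2 (Ne.symm hk))
      calc (1:ℝ) ≤ (|round x - k| : ℤ) := by exact_mod_cast this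
        _ = |(round x : ℝ) - k| := by push_cast; ring_nf
    have h2 : |x - round x| ≤ 1/2 := abs_sub_round x
    have h3 : |(round x : ℝ) - k| ≤ |(round x : ℝ) - x| + |x - k| := abs_sub_le _ _ _
    have h4 : |(round x : ℝ) - x| = |x - round x| := abs_sub_comm _ _
    linarith

lemma nint_zero : nint 0 = 0 := by
  rw [nint_eq_round]; simp


lemma supNint_le_iff {d : ℕ} [Nonempty (Fin d)] (y : Fin d → ℝ) (r : ℝ) :
    supNint y ≤ r ↔ ∀ i, nint (y i) ≤ r := by
  unfold supNint
  exact ciSup_le_iff (Set.finite_range _).bddAbove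

lemma supNint_self {d : ℕ} [Nonempty (Fin d)] (c : Fin d → ℝ) (r : ℝ) (hr : 0 ≤ r) :
    supNint (fun i => c i - c i) ≤ r := by
  rw [supNint_le_iff]
  intro i
  simpa [nint_zero] using hr

lemma nint_cases {u r : ℝ} (hu1 : -1 < u) (hu2 : u < 1) (hr : r < 1/2) (h : nint u ≤ r) :
    |u| ≤ r ∨ |u - 1| ≤ r ∨ |u + 1| ≤ r := by
  rw [nint_eq_round] at h
  have hb : |round u| ≤ 1 := by
    have h1 : |u - round u| ≤ 1/2 := abs_sub_round u
    have h2 : |(round u : ℝ)| ≤ |u| + |u - round u| := by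
      have := abs_sub_abs_le_abs_sub u (round u : ℝ)
      have := abs_nonneg (u - round u)
      have h3 : |(round u:ℝ)| - |u| ≤ |(round u:ℝ) - u| := abs_sub_abs_le_abs_sub _ _
      rw [abs_sub_comm] at h3
      linarith
    have h4 : |u| < 1 := abs_lt.2 ⟨hu1, hu2⟩
    have h5 : |(round u : ℝ)| < 2 := by linarith
    have h6 : ((|round u| : ℤ) : ℝ) < 2 := by rw [Int.cast_abs]; exact h5
    have h7 : |round u| < 2 := by exact_mod_cast h6
    omega
  have hb' := abs_le.1 hb
  have hcase : round u = 0 ∨ round u = 1 ∨ round u = -1 := by omega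
  rcases hcase with hc | hc | hc
  · left; rw [hc] at h; simpa using h
  · right; left; rw [hc] at h; simpa using h
  · right; right; rw [hc] at h
    have : u - (((-1:ℤ)):ℝ) = u + 1 := by push_cast; ring
    rw [this] at h; exact h

/-- Left endpoints of the (up to) three subintervals of `[0,1)` covering the torus
ball of radius `r` around `c`. -/
noncomputable def boxA (c r : ℝ) : Fin 3 → ℝ := ![max (c - r) 0, min (c + 1 - r) 1, 0]

/-- Right endpoints; `δ` is an enlargement parameter. -/
noncomputable def boxB (c r δ : ℝ) : Fin 3 → ℝ :=
  ![min (c + r + δ) 1, 1, min (max (c + r - 1) 0 + δ) 1]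

lemma boxmem : ∀ (a b c : ℝ), ![a,b,c] 0 = a ∧ ![a,b,c] 1 = b ∧ ![a,b,c] 2 = c :=
  fun a b c => ⟨rfl, rfl, rfl⟩

lemma box_valid {c r δ : ℝ} (hc0 : 0 ≤ c) (hc1 : c < 1) (hr0 : 0 ≤ r) (hr : r < 1/2)
    (hδ : 0 ≤ δ) (j : Fin 3) :
    0 ≤ boxA c r j ∧ boxA c r j ≤ boxB c r δ j ∧ boxB c r δ j ≤ 1 := by
  fin_cases j
  · show 0 ≤ max (c-r) 0 ∧ max (c-r) 0 ≤ min (c+r+δ) 1 ∧ min (c+r+δ) 1 ≤ 1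
    exact ⟨le_max_right _ _,
      le_min (max_le (by linarith) (by linarith)) (max_le (by linarith) (by linarith)),
      min_le_right _ _⟩
  · show 0 ≤ min (c+1-r) 1 ∧ min (c+1-r) 1 ≤ 1 ∧ (1:ℝ) ≤ 1
    exact ⟨le_min (by linarith) (by linarith), min_le_right _ _, le_rfl⟩
  · show (0:ℝ) ≤ 0 ∧ (0:ℝ) ≤ min (max (c+r-1) 0 + δ) 1 ∧ min (max (c+r-1) 0 + δ) 1 ≤ 1
    exact ⟨le_rfl, le_min (add_nonneg (le_max_right _ _) hδ) (by linarith), min_le_right _ _⟩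

lemma box_subset {c r t : ℝ} (hc0 : 0 ≤ c) (hc1 : c < 1) (hr0 : 0 ≤ r) (hr : r < 1/2)
    (ht0 : 0 ≤ t) (ht1 : t < 1) (j : Fin 3)
    (h1 : boxA c r j ≤ t) (h2 : t < boxB c r 0 j) : nint (t - c) ≤ r := by
  fin_cases j
  · replace h1 : max (c-r) 0 ≤ t := h1
    replace h2 : t < min (c+r+0) 1 := h2
    have ha : c - r ≤ t := le_trans (le_max_left _ _) h1
    have hb : t < c + r + 0 := lt_of_lt_of_le h2 (min_le_left _ _)
    refine le_trans (nint_le (t - c) 0) ?_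
    rw [abs_le]; push_cast; constructor <;> linarith
  · replace h1 : min (c+1-r) 1 ≤ t := h1
    replace h2 : t < (1:ℝ) := h2
    have hmin : min (c+1-r) 1 = c+1-r := by
      rcases le_or_gt (c+1-r) 1 with h | h
      · exact min_eq_left h
      · exfalso; rw [min_eq_right h.le] at h1; linarith
    rw [hmin] at h1
    refine le_trans (nint_le (t - c) 1) ?_
    rw [abs_le]; push_cast; constructor <;> linarith
  · replace h1 : (0:ℝ) ≤ t := h1
    replace h2 : t < min (max (c+r-1) 0 + 0) 1 := h2
    have hb : t < max (c+r-1) 0 + 0 := lt_of_lt_of_le h2 (min_le_left _ _)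
    have hmax : max (c+r-1) 0 = c+r-1 := by
      rcases le_or_gt (c+r-1) 0 with h | h
      · exfalso; rw [max_eq_right h] at hb; linarith
      · exact max_eq_left h.le
    rw [hmax] at hb
    refine le_trans (nint_le (t - c) (-1)) ?_
    rw [abs_le]; push_cast; constructor <;> linarith

lemma box_cover {c r δ t : ℝ} (hc0 : 0 ≤ c) (hc1 : c < 1) (hr0 : 0 ≤ r) (hr : r < 1/2)
    (hδ : 0 < δ) (ht0 : 0 ≤ t) (ht1 : t < 1) (h : nint (t - c) ≤ r) :
    ∃ j : Fin 3, boxA c r j ≤ t ∧ t < boxB c r δ j := by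
  rcases nint_cases (by linarith : (-1:ℝ) < t - c) (by linarith) hr h with h0 | h1 | h2
  · rw [abs_le] at h0
    refine ⟨0, ?_, ?_⟩
    · show max (c-r) 0 ≤ t
      exact max_le (by linarith [h0.1]) ht0
    · show t < min (c+r+δ) 1
      exact lt_min (by linarith [h0.2]) ht1
  · rw [abs_le] at h1
    refine ⟨1, ?_, ?_⟩
    · show min (c+1-r) 1 ≤ t
      exact le_trans (min_le_left _ _) (by linarith [h1.1])
    · exact ht1
  · rw [abs_le] at h2
    refine ⟨2, ht0, ?_⟩
    show t < min (max (c+r-1) 0 + δ) 1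
    refine lt_min ?_ ht1
    calc t ≤ c + r - 1 := by linarith [h2.2]
      _ ≤ max (c+r-1) 0 := le_max_left _ _
      _ < max (c+r-1) 0 + δ := by linarith

lemma box_len_eq {c r : ℝ} (hc0 : 0 ≤ c) (hc1 : c < 1) (hr0 : 0 ≤ r) (hr : r < 1/2) :
    ∑ j : Fin 3, (boxB c r 0 j - boxA c r j) = 2 * r := by
  rw [Fin.sum_univ_three]
  show (min (c+r+0) 1 - max (c-r) 0) + (1 - min (c+1-r) 1) + (min (max (c+r-1) 0 + 0) 1 - 0) = 2*r
  rcases le_or_gt r c with hrc | hrc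
  · have e2 : min (c+1-r) 1 = 1 := min_eq_right (by linarith)
    rcases le_or_gt (c+r) 1 with hc2 | hc2
    · have e1 : min (c+r+0) 1 = c+r+0 := min_eq_left (by linarith)
      have e3 : max (c-r) 0 = c-r := max_eq_left (by linarith)
      have e4 : max (c+r-1) 0 = 0 := max_eq_right (by linarith)
      have e5 : min ((0:ℝ)+0) 1 = 0+0 := by norm_num
      rw [e1, e2, e3, e4, e5]; ring
    · have e1 : min (c+r+0) 1 = 1 := min_eq_right (by linarith)
      have e3 : max (c-r) 0 = c-r := max_eq_left (by linarith)
      have e4 : max (c+r-1) 0 = c+r-1 := max_eq_left (by linarith)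
      have e5 : min (c+r-1+0) 1 = c+r-1+0 := min_eq_left (by linarith)
      rw [e1, e2, e3, e4, e5]; ring
  · have hcr1 : c + r < 1 := by linarith
    have e1 : min (c+r+0) 1 = c+r+0 := min_eq_left (by linarith)
    have e2 : min (c+1-r) 1 = c+1-r := min_eq_left (by linarith)
    have e3 : max (c-r) 0 = 0 := max_eq_right (by linarith)
    have e4 : max (c+r-1) 0 = 0 := max_eq_right (by linarith)
    have e5 : min ((0:ℝ)+0) 1 = 0+0 := by norm_num
    rw [e1, e2, e3, e4, e5]; ring

lemma box_len_le {c r δ : ℝ} (hc0 : 0 ≤ c) (hc1 : c < 1) (hr0 : 0 ≤ r) (hr : r < 1/2)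
    (hδ : 0 ≤ δ) :
    ∑ j : Fin 3, (boxB c r δ j - boxA c r j) ≤ 2 * r + 2 * δ := by
  rw [Fin.sum_univ_three]
  show (min (c+r+δ) 1 - max (c-r) 0) + (1 - min (c+1-r) 1) + (min (max (c+r-1) 0 + δ) 1 - 0)
      ≤ 2*r + 2*δ
  have k1 : min (c+r+δ) 1 ≤ c+r+δ := min_le_left _ _
  have k1' : min (c+r+δ) 1 ≤ 1 := min_le_right _ _
  have k3 : c - r ≤ max (c-r) 0 := le_max_left _ _
  have k3' : (0:ℝ) ≤ max (c-r) 0 := le_max_right _ _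
  rcases le_or_gt r c with hrc | hrc
  · have e2 : min (c+1-r) 1 = 1 := min_eq_right (by linarith)
    rcases le_or_gt (c+r) 1 with hc2 | hc2
    · have e4 : max (c+r-1) 0 = 0 := max_eq_right (by linarith)
      rw [e2, e4]
      have k5 : min ((0:ℝ)+δ) 1 ≤ 0+δ := min_le_left _ _
      linarith
    · have e4 : max (c+r-1) 0 = c+r-1 := max_eq_left (by linarith)
      rw [e2, e4]
      have k5 : min (c+r-1+δ) 1 ≤ c+r-1+δ := min_le_left _ _
      linarith
  · have e2 : min (c+1-r) 1 = c+1-r := min_eq_left (by linarith)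
    have e4 : max (c+r-1) 0 = 0 := max_eq_right (by linarith)
    rw [e2, e4]
    have k5 : min ((0:ℝ)+δ) 1 ≤ 0+δ := min_le_left _ _
    linarith

lemma box_disjoint {c r t : ℝ} (hc0 : 0 ≤ c) (hc1 : c < 1) (hr0 : 0 ≤ r) (hr : r < 1/2)
    {j j' : Fin 3} (hjj : j ≠ j')
    (h1 : boxA c r j ≤ t) (h2 : t < boxB c r 0 j)
    (h3 : boxA c r j' ≤ t) (h4 : t < boxB c r 0 j') : False := by
  have key : ∀ u v : Fin 3, u ≠ v → boxA c r u ≤ t → t < boxB c r 0 u →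
      boxA c r v ≤ t → t < boxB c r 0 v → (u = 0 ∧ v = 1) ∨ (u = 0 ∧ v = 2) ∨ (u = 1 ∧ v = 2) →
      False := by
    intro u v _ p1 p2 p3 p4 hcase
    rcases hcase with ⟨hu, hv⟩ | ⟨hu, hv⟩ | ⟨hu, hv⟩ <;> subst hu <;> subst hv
    · replace p2 : t < min (c+r+0) 1 := p2
      replace p3 : min (c+1-r) 1 ≤ t := p3
      have q1 : t < c+r+0 := lt_of_lt_of_le p2 (min_le_left _ _)
      have q2 : t < 1 := lt_of_lt_of_le p2 (min_le_right _ _)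
      have : t < min (c+1-r) 1 := lt_min (by linarith) q2
      linarith
    · replace p1 : max (c-r) 0 ≤ t := p1
      replace p4 : t < min (max (c+r-1) 0 + 0) 1 := p4
      have q1 : t < max (c+r-1) 0 + 0 := lt_of_lt_of_le p4 (min_le_left _ _)
      have q2 : max (c+r-1) 0 ≤ max (c-r) 0 := max_le
        (le_trans (by linarith) (le_max_left (c-r) 0)) (le_max_right _ _)
      linarith
    · replace p1 : min (c+1-r) 1 ≤ t := p1
      replace p4 : t < min (max (c+r-1) 0 + 0) 1 := p4
      have q1 : t < max (c+r-1) 0 + 0 := lt_of_lt_of_le p4 (min_le_left _ _)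
      have q2 : max (c+r-1) 0 ≤ min (c+1-r) 1 := max_le
        (le_min (by linarith) (by linarith)) (le_min (by linarith) (by linarith))
      linarith
  fin_cases j <;> fin_cases j' <;> first
    | exact absurd rfl hjj
    | exact key _ _ hjj h1 h2 h3 h4 (by decide)
    | exact key _ _ hjj.symm h3 h4 h1 h2 (by decide)


lemma card_div_le_one (N : ℕ) (s : Finset ℕ) (hs : s ⊆ Finset.Icc 1 N) :
    (0:ℝ) ≤ (s.card : ℝ) / N ∧ (s.card : ℝ) / N ≤ 1 := by
  have h1 : s.card ≤ N := by
    have := Finset.card_le_card hs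
    rwa [Nat.card_Icc, Nat.add_sub_cancel] at this
  constructor
  · positivity
  · rcases Nat.eq_zero_or_pos N with rfl | hN
    · interval_cases hc : s.card
      · simp
    · rw [div_le_one (by exact_mod_cast hN)]
      exact_mod_cast h1

lemma disc_le {d : ℕ} (N : ℕ) (x : ℕ → Fin d → ℝ) (a b : Fin d → ℝ)
    (h : ∀ i, 0 ≤ a i ∧ a i ≤ b i ∧ b i ≤ 1) :
    |(((Finset.Icc 1 N).filter (fun n => ∀ i, a i ≤ x n i ∧ x n i < b i)).card : ℝ) / N
      - ∏ i, (b i - a i)| ≤ discrepancy d N x := by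
  apply le_csSup
  · refine ⟨2, ?_⟩
    rintro v ⟨a, b, hab, rfl⟩
    have hc := card_div_le_one N ((Finset.Icc 1 N).filter (fun n => ∀ i, a i ≤ x n i ∧ x n i < b i)) (Finset.filter_subset _ _)
    have hp0 : (0:ℝ) ≤ ∏ i, (b i - a i) :=
      Finset.prod_nonneg fun i _ => by linarith [(hab i).1, (hab i).2.1]
    have hp1 : ∏ i, (b i - a i) ≤ 1 :=
      Finset.prod_le_one (fun i _ => by linarith [(hab i).1, (hab i).2.1])
        (fun i _ => by linarith [(hab i).1, (hab i).2.1, (hab i).2.2])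
    rw [abs_le]
    constructor <;> linarith [hc.1, hc.2]
  · exact ⟨a, b, h, rfl⟩

lemma disc_nonneg {d : ℕ} (hd : 1 ≤ d) (N : ℕ) (x : ℕ → Fin d → ℝ) :
    0 ≤ discrepancy d N x := by
  have h := disc_le N x (fun _ => 0) (fun _ => 0) (fun i => ⟨le_rfl, le_rfl, zero_le_one⟩)
  exact le_trans (abs_nonneg _) h

lemma card_fun3 (d : ℕ) : (Finset.univ : Finset (Fin d → Fin 3)).card = 3^d := by
  simp [Finset.card_univ]

lemma count_lower {d : ℕ} [Nonempty (Fin d)] (x : ℕ → Fin d → ℝ)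
    (hx : ∀ n, ∀ i, x n i ∈ Set.Ico (0:ℝ) 1) (N l : ℕ)
    {r : ℝ} (hr0 : 0 ≤ r) (hr : r < 1/2) :
    (N:ℝ) * (2*r)^d - 3^d * ((N:ℝ) * discrepancy d N x) ≤
    (((Finset.Icc 1 N).filter (fun m => supNint (fun i => x m i - x l i) ≤ r)).card : ℝ) := by
  classical
  set D := discrepancy d N x with hD
  set S := (Finset.Icc 1 N).filter (fun m => supNint (fun i => x m i - x l i) ≤ r) with hS
  set F : (Fin d → Fin 3) → Finset ℕ := fun σ => (Finset.Icc 1 N).filter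
    (fun m => ∀ i, boxA (x l i) r (σ i) ≤ x m i ∧ x m i < boxB (x l i) r 0 (σ i)) with hF
  have hFsub : ∀ σ : Fin d → Fin 3, F σ ⊆ S := by
    intro σ m hm
    rw [hF, Finset.mem_filter] at hm
    rw [hS, Finset.mem_filter]
    refine ⟨hm.1, ?_⟩
    rw [supNint_le_iff]
    intro i
    exact box_subset (hx l i).1 (hx l i).2 hr0 hr (hx m i).1 (hx m i).2 _ (hm.2 i).1 (hm.2 i).2
  have hdisj : ∀ σ ∈ (Finset.univ : Finset (Fin d → Fin 3)), ∀ τ ∈ Finset.univ, σ ≠ τ →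
      Disjoint (F σ) (F τ) := by
    intro σ _ τ _ hστ
    rw [Finset.disjoint_left]
    intro m hmσ hmτ
    rw [hF, Finset.mem_filter] at hmσ hmτ
    have hne : ∃ i, σ i ≠ τ i := by
      by_contra hcon
      push_neg at hcon
      exact hστ (funext hcon)
    obtain ⟨i, hi⟩ := hne
    exact box_disjoint (hx l i).1 (hx l i).2 hr0 hr hi
      (hmσ.2 i).1 (hmσ.2 i).2 (hmτ.2 i).1 (hmτ.2 i).2
  have hcard : ∑ σ : Fin d → Fin 3, ((F σ).card : ℝ) ≤ (S.card : ℝ) := by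
    have h1 : (Finset.univ.biUnion F).card = ∑ σ : Fin d → Fin 3, (F σ).card :=
      Finset.card_biUnion hdisj
    have h2 : Finset.univ.biUnion F ⊆ S := Finset.biUnion_subset.2 fun σ _ => hFsub σ
    have := Finset.card_le_card h2
    rw [h1] at this
    exact_mod_cast this
  have hvol : ∑ σ : Fin d → Fin 3, ∏ i, (boxB (x l i) r 0 (σ i) - boxA (x l i) r (σ i))
      = (2*r)^d := by
    have := Finset.prod_univ_sum (fun _ : Fin d => (Finset.univ : Finset (Fin 3)))
      (fun i j => boxB (x l i) r 0 j - boxA (x l i) r j)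
    rw [Fintype.piFinset_univ] at this
    rw [← this]
    calc ∏ i : Fin d, ∑ j : Fin 3, (boxB (x l i) r 0 j - boxA (x l i) r j)
        = ∏ _i : Fin d, (2*r) :=
          Finset.prod_congr rfl fun i _ => box_len_eq (hx l i).1 (hx l i).2 hr0 hr
      _ = (2*r)^d := by simp [Finset.prod_const, Finset.card_univ]
  have hper : ∀ σ : Fin d → Fin 3,
      (N:ℝ) * (∏ i, (boxB (x l i) r 0 (σ i) - boxA (x l i) r (σ i))) - (N:ℝ) * D
      ≤ ((F σ).card : ℝ) := by
    intro σ
    have hval := fun i => box_valid (hx l i).1 (hx l i).2 hr0 hr le_rfl (σ i)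
    have hdle := disc_le N x (fun i => boxA (x l i) r (σ i)) (fun i => boxB (x l i) r 0 (σ i))
      hval
    rw [← hD, abs_le] at hdle
    have h1 := hdle.1
    rcases Nat.eq_zero_or_pos N with rfl | hN
    · simp
    · have hN' : (0:ℝ) < N := by exact_mod_cast hN
      have h2 : (∏ i, (boxB (x l i) r 0 (σ i) - boxA (x l i) r (σ i))) - D
          ≤ ((F σ).card : ℝ) / N := by linarith
      rw [le_div_iff₀ hN'] at h2
      have : (F σ) = (Finset.Icc 1 N).filter
        (fun m => ∀ i, boxA (x l i) r (σ i) ≤ x m i ∧ x m i < boxB (x l i) r 0 (σ i)) := rfl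
      rw [this]
      nlinarith [h2]
  calc (N:ℝ) * (2*r)^d - 3^d * ((N:ℝ) * D)
      = ∑ σ : Fin d → Fin 3,
          ((N:ℝ) * (∏ i, (boxB (x l i) r 0 (σ i) - boxA (x l i) r (σ i))) - (N:ℝ) * D) := by
        rw [Finset.sum_sub_distrib, ← Finset.mul_sum, hvol, Finset.sum_const, card_fun3,
          nsmul_eq_mul]
        push_cast
        ring
    _ ≤ ∑ σ : Fin d → Fin 3, ((F σ).card : ℝ) := Finset.sum_le_sum fun σ _ => hper σ
    _ ≤ (S.card : ℝ) := hcard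

lemma count_upper {d : ℕ} [Nonempty (Fin d)] (x : ℕ → Fin d → ℝ)
    (hx : ∀ n, ∀ i, x n i ∈ Set.Ico (0:ℝ) 1) (N l : ℕ)
    {r δ : ℝ} (hr0 : 0 ≤ r) (hr : r < 1/2) (hδ : 0 < δ) :
    (((Finset.Icc 1 N).filter (fun m => supNint (fun i => x m i - x l i) ≤ r)).card : ℝ)
    ≤ (N:ℝ) * (2*r + 2*δ)^d + 3^d * ((N:ℝ) * discrepancy d N x) := by
  classical
  set D := discrepancy d N x with hD
  set S := (Finset.Icc 1 N).filter (fun m => supNint (fun i => x m i - x l i) ≤ r) with hS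
  set F : (Fin d → Fin 3) → Finset ℕ := fun σ => (Finset.Icc 1 N).filter
    (fun m => ∀ i, boxA (x l i) r (σ i) ≤ x m i ∧ x m i < boxB (x l i) r δ (σ i)) with hF
  have hScov : S ⊆ Finset.univ.biUnion F := by
    intro m hm
    rw [hS, Finset.mem_filter] at hm
    rw [supNint_le_iff] at hm
    have hch : ∀ i : Fin d, ∃ j : Fin 3, boxA (x l i) r j ≤ x m i ∧ x m i < boxB (x l i) r δ j :=
      fun i => box_cover (hx l i).1 (hx l i).2 hr0 hr hδ (hx m i).1 (hx m i).2 (hm.2 i)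
    choose σ hσ using hch
    rw [Finset.mem_biUnion]
    exact ⟨σ, Finset.mem_univ _, by rw [hF, Finset.mem_filter]; exact ⟨hm.1, hσ⟩⟩
  have hcard : (S.card : ℝ) ≤ ∑ σ : Fin d → Fin 3, ((F σ).card : ℝ) := by
    have h1 := Finset.card_le_card hScov
    have h2 := Finset.card_biUnion_le (s := (Finset.univ : Finset (Fin d → Fin 3))) (t := F)
    have := le_trans h1 h2
    exact_mod_cast this
  have hvol : ∑ σ : Fin d → Fin 3, ∏ i, (boxB (x l i) r δ (σ i) - boxA (x l i) r (σ i))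
      ≤ (2*r + 2*δ)^d := by
    have hps := Finset.prod_univ_sum (fun _ : Fin d => (Finset.univ : Finset (Fin 3)))
      (fun i j => boxB (x l i) r δ j - boxA (x l i) r j)
    rw [Fintype.piFinset_univ] at hps
    rw [← hps]
    calc ∏ i : Fin d, ∑ j : Fin 3, (boxB (x l i) r δ j - boxA (x l i) r j)
        ≤ ∏ _i : Fin d, (2*r + 2*δ) := by
          apply Finset.prod_le_prod
          · intro i _
            refine Finset.sum_nonneg fun j _ => ?_
            have := box_valid (hx l i).1 (hx l i).2 hr0 hr hδ.le j
            linarith [this.2.1]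
          · intro i _
            exact box_len_le (hx l i).1 (hx l i).2 hr0 hr hδ.le
      _ = (2*r + 2*δ)^d := by simp [Finset.prod_const, Finset.card_univ]
  have hper : ∀ σ : Fin d → Fin 3, ((F σ).card : ℝ)
      ≤ (N:ℝ) * (∏ i, (boxB (x l i) r δ (σ i) - boxA (x l i) r (σ i))) + (N:ℝ) * D := by
    intro σ
    have hval := fun i => box_valid (hx l i).1 (hx l i).2 hr0 hr hδ.le (σ i)
    have hdle := disc_le N x (fun i => boxA (x l i) r (σ i)) (fun i => boxB (x l i) r δ (σ i))
      hval
    rw [← hD, abs_le] at hdle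
    have h1 := hdle.2
    rcases Nat.eq_zero_or_pos N with rfl | hN
    · have : (F σ).card = 0 := by rw [hF]; simp
      rw [this]
      have hv : (0:ℝ) ≤ ∏ i, (boxB (x l i) r δ (σ i) - boxA (x l i) r (σ i)) :=
        Finset.prod_nonneg fun i _ => by linarith [(hval i).2.1]
      simp
    · have hN' : (0:ℝ) < N := by exact_mod_cast hN
      have h2 : ((F σ).card : ℝ) / N
          ≤ (∏ i, (boxB (x l i) r δ (σ i) - boxA (x l i) r (σ i))) + D := by linarith
      rw [div_le_iff₀ hN'] at h2
      nlinarith [h2]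
  calc (S.card : ℝ) ≤ ∑ σ : Fin d → Fin 3, ((F σ).card : ℝ) := hcard
    _ ≤ ∑ σ : Fin d → Fin 3,
          ((N:ℝ) * (∏ i, (boxB (x l i) r δ (σ i) - boxA (x l i) r (σ i))) + (N:ℝ) * D) :=
        Finset.sum_le_sum fun σ _ => hper σ
    _ ≤ (N:ℝ) * (2*r + 2*δ)^d + 3^d * ((N:ℝ) * D) := by
        rw [Finset.sum_add_distrib, ← Finset.mul_sum, Finset.sum_const, card_fun3, nsmul_eq_mul]
        push_cast
        have := mul_le_mul_of_nonneg_left hvol (by positivity : (0:ℝ) ≤ (N:ℝ))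
        linarith


lemma nint_neg (u : ℝ) : nint (-u) = nint u := by
  have key : ∀ v : ℝ, nint (-v) ≤ nint v := by
    intro v
    calc nint (-v) ≤ |(-v) - ((-(round v) : ℤ) : ℝ)| := nint_le _ _
      _ = |v - round v| := by push_cast; rw [← abs_neg]; ring_nf
      _ = nint v := (nint_eq_round v).symm
  refine le_antisymm (key u) ?_
  have := key (-u)
  rwa [neg_neg] at this

lemma supNint_comm {d : ℕ} (a b : Fin d → ℝ) :
    supNint (fun i => a i - b i) = supNint (fun i => b i - a i) := by
  unfold supNint
  exact iSup_congr fun i => by rw [← nint_neg (b i - a i), neg_sub]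

lemma pairCount_add {d : ℕ} [Nonempty (Fin d)] (x : ℕ → Fin d → ℝ) (N : ℕ)
    {r : ℝ} (hr : 0 ≤ r) :
    pairCount d x N r + N = ∑ l ∈ Finset.Icc 1 N,
      ((Finset.Icc 1 N).filter (fun m => supNint (fun i => x m i - x l i) ≤ r)).card := by
  classical
  set S : ℕ → Finset ℕ := fun l =>
    (Finset.Icc 1 N).filter (fun m => supNint (fun i => x m i - x l i) ≤ r) with hSdef
  set P := ((Finset.Icc 1 N) ×ˢ (Finset.Icc 1 N)).filter
    (fun p : ℕ × ℕ => p.1 ≠ p.2 ∧ supNint (fun i => x p.1 i - x p.2 i) ≤ r) with hP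
  have step1 : P.card = ∑ l ∈ Finset.Icc 1 N, (P.filter (fun p => p.1 = l)).card := by
    apply Finset.card_eq_sum_card_fiberwise
    intro p hp
    rw [hP, Finset.mem_coe, Finset.mem_filter, Finset.mem_product] at hp
    exact hp.1.1
  have step2 : ∀ l ∈ Finset.Icc 1 N, (P.filter (fun p => p.1 = l)).card = ((S l).erase l).card := by
    intro l hl
    apply Finset.card_bij (fun (p : ℕ × ℕ) _ => p.2)
    · intro p hp
      rw [Finset.mem_filter, hP, Finset.mem_filter, Finset.mem_product] at hp
      obtain ⟨⟨⟨_, hp2⟩, hne, hsup⟩, hfst⟩ := hp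
      rw [Finset.mem_erase, hSdef]
      subst hfst
      refine ⟨fun h => hne h.symm, ?_⟩
      rw [Finset.mem_filter]
      exact ⟨hp2, by rwa [supNint_comm]⟩
    · intro p hp q hq hpq
      rw [Finset.mem_filter] at hp hq
      exact Prod.ext (hp.2.trans hq.2.symm) hpq
    · intro m hm
      rw [Finset.mem_erase, hSdef, Finset.mem_filter] at hm
      refine ⟨(l, m), ?_, rfl⟩
      rw [Finset.mem_filter, hP, Finset.mem_filter, Finset.mem_product]
      exact ⟨⟨⟨hl, hm.2.1⟩, fun h => hm.1 h.symm, by rw [supNint_comm]; exact hm.2.2⟩, rfl⟩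
  have hmem : ∀ l ∈ Finset.Icc 1 N, l ∈ S l := by
    intro l hl
    rw [hSdef, Finset.mem_filter]
    exact ⟨hl, supNint_self _ r hr⟩
  have step3 : ∀ l ∈ Finset.Icc 1 N, ((S l).erase l).card + 1 = (S l).card := by
    intro l hl
    exact Finset.card_erase_add_one (hmem l hl)
  have : pairCount d x N r = ∑ l ∈ Finset.Icc 1 N, ((S l).erase l).card := by
    rw [pairCount, ← hP, step1]
    exact Finset.sum_congr rfl step2
  rw [this]
  have hN : (Finset.Icc 1 N).card = N := by rw [Nat.card_Icc, Nat.add_sub_cancel]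
  calc ∑ l ∈ Finset.Icc 1 N, ((S l).erase l).card + N
      = ∑ l ∈ Finset.Icc 1 N, (((S l).erase l).card + 1) := by
        rw [Finset.sum_add_distrib, Finset.sum_const, hN, smul_eq_mul, mul_one]
    _ = ∑ l ∈ Finset.Icc 1 N, (S l).card := Finset.sum_congr rfl step3

lemma pair_bounds {d : ℕ} [Nonempty (Fin d)] (x : ℕ → Fin d → ℝ)
    (hx : ∀ n, ∀ i, x n i ∈ Set.Ico (0:ℝ) 1) (N : ℕ)
    {r δ : ℝ} (hr0 : 0 ≤ r) (hr : r < 1/2) (hδ : 0 < δ) :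
    (N:ℝ)^2*(2*r)^d - 3^d*((N:ℝ)^2 * discrepancy d N x) - N ≤ (pairCount d x N r : ℝ) ∧
    (pairCount d x N r : ℝ) ≤ (N:ℝ)^2*(2*r+2*δ)^d + 3^d*((N:ℝ)^2 * discrepancy d N x) := by
  classical
  set D := discrepancy d N x with hD
  have key := pairCount_add x N hr0
  have keyR : (pairCount d x N r : ℝ) + N = ∑ l ∈ Finset.Icc 1 N,
      ((((Finset.Icc 1 N).filter (fun m => supNint (fun i => x m i - x l i) ≤ r)).card : ℝ)) := by
    exact_mod_cast key
  have hN : (Finset.Icc 1 N).card = N := by rw [Nat.card_Icc, Nat.add_sub_cancel]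
  have hsum_low : (N:ℝ) * ((N:ℝ)*(2*r)^d - 3^d*((N:ℝ)*D)) ≤ ∑ l ∈ Finset.Icc 1 N,
      ((((Finset.Icc 1 N).filter (fun m => supNint (fun i => x m i - x l i) ≤ r)).card : ℝ)) := by
    have h0 : (Finset.Icc 1 N).card • ((N:ℝ)*(2*r)^d - 3^d*((N:ℝ)*D)) ≤
        ∑ l ∈ Finset.Icc 1 N, ((((Finset.Icc 1 N).filter
          (fun m => supNint (fun i => x m i - x l i) ≤ r)).card : ℝ)) :=
      Finset.card_nsmul_le_sum _ _ _ (fun l _ => count_lower x hx N l hr0 hr)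
    rwa [hN, nsmul_eq_mul] at h0
  have hsum_up : (∑ l ∈ Finset.Icc 1 N,
      ((((Finset.Icc 1 N).filter (fun m => supNint (fun i => x m i - x l i) ≤ r)).card : ℝ)))
      ≤ (N:ℝ) * ((N:ℝ)*(2*r+2*δ)^d + 3^d*((N:ℝ)*D)) := by
    have h0 : (∑ l ∈ Finset.Icc 1 N, ((((Finset.Icc 1 N).filter
          (fun m => supNint (fun i => x m i - x l i) ≤ r)).card : ℝ)))
        ≤ (Finset.Icc 1 N).card • ((N:ℝ)*(2*r+2*δ)^d + 3^d*((N:ℝ)*D)) :=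
      Finset.sum_le_card_nsmul _ _ _ (fun l _ => count_upper x hx N l hr0 hr hδ)
    rwa [hN, nsmul_eq_mul] at h0
  constructor
  · nlinarith [hsum_low, keyR]
  · nlinarith [hsum_up, keyR, (Nat.cast_nonneg N : (0:ℝ) ≤ N)]


theorem stmt1 (d : ℕ) (hd : 1 ≤ d) (ε : ℝ) (hε : 0 < ε) (hεd : ε < 1 / d)
    (x : ℕ → Fin d → ℝ) (hx : ∀ n, ∀ i, x n i ∈ Set.Ico (0 : ℝ) 1)
    (hD : Filter.Tendsto (fun N : ℕ => (N : ℝ) ^ (1 - ε) * discrepancy d N x)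
      Filter.atTop (nhds 0)) :
    ∀ s : ℝ, 0 < s → Filter.Tendsto
      (fun N : ℕ => (pairCount d x N (s / (N : ℝ) ^ ((1 - ε) / d)) : ℝ) /
        ((N : ℝ) ^ 2 * (2 * s / (N : ℝ) ^ ((1 - ε) / d)) ^ d)) Filter.atTop (nhds 1) := by
  intro s hs
  haveI : Nonempty (Fin d) := ⟨⟨0, hd⟩⟩
  have hdR : (0:ℝ) < d := by exact_mod_cast hd
  have hd1 : (1:ℝ)/d ≤ 1 := by rw [div_le_one hdR]; exact_mod_cast hd
  have hε1 : ε < 1 := lt_of_lt_of_le hεd hd1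
  set α := (1 - ε) / (d:ℝ) with hαdef
  have hα : 0 < α := div_pos (by linarith) hdR
  have hαd : α * (d:ℝ) = 1 - ε := by rw [hαdef]; field_simp
  -- limits of the bounding functions
  have hNtend : Filter.Tendsto (fun N : ℕ => (N:ℝ)) Filter.atTop Filter.atTop :=
    tendsto_natCast_atTop_atTop
  have hGm : Filter.Tendsto (fun N : ℕ => (3:ℝ)^d * ((N:ℝ)^(1-ε) * discrepancy d N x))
      Filter.atTop (nhds 0) := by
    have h0 := hD.const_mul ((3:ℝ)^d)
    rw [mul_zero] at h0
    exact h0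
  have hNe : Filter.Tendsto (fun N : ℕ => (N:ℝ)^(-ε)) Filter.atTop (nhds 0) :=
    (tendsto_rpow_neg_atTop hε).comp hNtend
  have hlo : Filter.Tendsto (fun N : ℕ =>
      1 - (3^d * ((N:ℝ)^(1-ε) * discrepancy d N x) + (N:ℝ)^(-ε)) / (2*s)^d)
      Filter.atTop (nhds 1) := by
    have h1 := ((hGm.add hNe).div_const ((2*s)^d))
    have := (tendsto_const_nhds (x := (1:ℝ)) (f := Filter.atTop (α := ℕ))).sub h1
    simpa using this
  have hhi : Filter.Tendsto (fun N : ℕ =>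
      (1 + 1/(N:ℝ))^d + 3^d * ((N:ℝ)^(1-ε) * discrepancy d N x) / (2*s)^d)
      Filter.atTop (nhds 1) := by
    have h1 : Filter.Tendsto (fun N : ℕ => (1 + 1/(N:ℝ))^d) Filter.atTop (nhds 1) := by
      have h2 : Filter.Tendsto (fun N : ℕ => 1 + 1/(N:ℝ)) Filter.atTop (nhds 1) := by
        have := (tendsto_const_nhds (x := (1:ℝ))
          (f := Filter.atTop (α := ℕ))).add tendsto_one_div_atTop_nhds_zero_nat
        simpa using this
      have := h2.pow d
      simpa using this
    have h3 := hGm.div_const ((2*s)^d)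
    have := h1.add h3
    simpa using this
  -- smallness of the radius
  have hrtend : Filter.Tendsto (fun N : ℕ => s / (N:ℝ)^α) Filter.atTop (nhds 0) := by
    have hpow : Filter.Tendsto (fun N : ℕ => (N:ℝ)^α) Filter.atTop Filter.atTop :=
      (tendsto_rpow_atTop hα).comp hNtend
    have := hpow.inv_tendsto_atTop.const_mul s
    simpa [div_eq_mul_inv] using this
  have hsmall : ∀ᶠ N : ℕ in Filter.atTop, s / (N:ℝ)^α < 1/2 := by
    have : Set.Iio (1/2 : ℝ) ∈ nhds (0:ℝ) := Iio_mem_nhds (by norm_num)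
    exact hrtend.eventually (this)
  refine tendsto_of_tendsto_of_tendsto_of_le_of_le' hlo hhi ?_ ?_
  · filter_upwards [hsmall, Filter.eventually_ge_atTop 1] with N hrN hN1
    have hN0 : (0:ℝ) < N := by exact_mod_cast hN1
    have hNα : (0:ℝ) < (N:ℝ)^α := Real.rpow_pos_of_pos hN0 α
    set R := s / (N:ℝ)^α with hRdef
    have hR0 : 0 < R := div_pos hs hNα
    set u := (N:ℝ)^(1-ε) with hu
    set v := (N:ℝ)^(1+ε) with hv
    have hu0 : 0 < u := Real.rpow_pos_of_pos hN0 _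
    have hv0 : 0 < v := Real.rpow_pos_of_pos hN0 _
    have eN2 : u * v = (N:ℝ)^2 := by
      rw [hu, hv, ← Real.rpow_add hN0,
        show (1-ε) + (1+ε) = ((2:ℕ):ℝ) by push_cast; ring, Real.rpow_natCast]
    have eN1 : (N:ℝ)^(-ε) * v = (N:ℝ) := by
      rw [hv, ← Real.rpow_add hN0, show -ε + (1+ε) = ((1:ℕ):ℝ) by push_cast; ring,
        Real.rpow_natCast, pow_one]
    have e0 : ((N:ℝ)^α)^d = u := by
      rw [hu, ← Real.rpow_natCast ((N:ℝ)^α) d, ← Real.rpow_mul hN0.le, hαd]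
    have e1 : (2*R)^d = (2*s)^d / u := by
      rw [hRdef, ← mul_div_assoc, div_pow, e0]
    have hQ : (N:ℝ)^2 * (2 * s / (N:ℝ)^α)^d = (2*s)^d * v := by
      rw [mul_div_assoc, ← hRdef, e1, ← eN2]
      field_simp
    have hQpos : (0:ℝ) < (N:ℝ)^2 * (2 * s / (N:ℝ)^α)^d := by
      rw [hQ]; positivity
    rw [le_div_iff₀ hQpos]
    obtain ⟨hPlow, _⟩ := pair_bounds x hx N (r := R) (δ := R / N) hR0.le hrN
      (div_pos hR0 hN0)
    have hloQ : (1 - (3^d * (u * discrepancy d N x) + (N:ℝ)^(-ε)) / (2*s)^d) *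
        ((N:ℝ)^2 * (2 * s / (N:ℝ)^α)^d)
        = (N:ℝ)^2*(2*R)^d - 3^d*((N:ℝ)^2 * discrepancy d N x) - (N:ℝ) := by
      rw [hQ]
      have h2s : ((2:ℝ)*s)^d ≠ 0 := by positivity
      calc (1 - (3^d * (u * discrepancy d N x) + (N:ℝ)^(-ε)) / (2*s)^d) * ((2*s)^d * v)
          = (2*s)^d * v - (3^d*((u*v) * discrepancy d N x) + (N:ℝ)^(-ε) * v) := by
            field_simp
        _ = (N:ℝ)^2*(2*R)^d - 3^d*((N:ℝ)^2 * discrepancy d N x) - (N:ℝ) := by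
            rw [eN2, eN1, ← hQ, mul_div_assoc, ← hRdef]
            ring
    calc (1 - (3^d * (u * discrepancy d N x) + (N:ℝ)^(-ε)) / (2*s)^d) *
        ((N:ℝ)^2 * (2 * s / (N:ℝ)^α)^d)
        = (N:ℝ)^2*(2*R)^d - 3^d*((N:ℝ)^2 * discrepancy d N x) - (N:ℝ) := hloQ
      _ ≤ (pairCount d x N R : ℝ) := hPlow
  · filter_upwards [hsmall, Filter.eventually_ge_atTop 1] with N hrN hN1
    have hN0 : (0:ℝ) < N := by exact_mod_cast hN1
    have hNα : (0:ℝ) < (N:ℝ)^α := Real.rpow_pos_of_pos hN0 α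
    set R := s / (N:ℝ)^α with hRdef
    have hR0 : 0 < R := div_pos hs hNα
    set u := (N:ℝ)^(1-ε) with hu
    set v := (N:ℝ)^(1+ε) with hv
    have hu0 : 0 < u := Real.rpow_pos_of_pos hN0 _
    have hv0 : 0 < v := Real.rpow_pos_of_pos hN0 _
    have eN2 : u * v = (N:ℝ)^2 := by
      rw [hu, hv, ← Real.rpow_add hN0,
        show (1-ε) + (1+ε) = ((2:ℕ):ℝ) by push_cast; ring, Real.rpow_natCast]
    have e0 : ((N:ℝ)^α)^d = u := by
      rw [hu, ← Real.rpow_natCast ((N:ℝ)^α) d, ← Real.rpow_mul hN0.le, hαd]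
    have e1 : (2*R)^d = (2*s)^d / u := by
      rw [hRdef, ← mul_div_assoc, div_pow, e0]
    have hQ : (N:ℝ)^2 * (2 * s / (N:ℝ)^α)^d = (2*s)^d * v := by
      rw [mul_div_assoc, ← hRdef, e1, ← eN2]
      field_simp
    have hQpos : (0:ℝ) < (N:ℝ)^2 * (2 * s / (N:ℝ)^α)^d := by
      rw [hQ]; positivity
    rw [div_le_iff₀ hQpos]
    obtain ⟨_, hPup⟩ := pair_bounds x hx N (r := R) (δ := R / N) hR0.le hrN
      (div_pos hR0 hN0)
    have hδeq : 2*R + 2*(R/N) = (2*R) * (1 + 1/(N:ℝ)) := by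
      field_simp
    have hhiQ : ((1 + 1/(N:ℝ))^d + 3^d * (u * discrepancy d N x) / (2*s)^d) *
        ((N:ℝ)^2 * (2 * s / (N:ℝ)^α)^d)
        = (N:ℝ)^2*(2*R + 2*(R/N))^d + 3^d*((N:ℝ)^2 * discrepancy d N x) := by
      rw [hQ, hδeq]
      have h2s : ((2:ℝ)*s)^d ≠ 0 := by positivity
      calc ((1 + 1/(N:ℝ))^d + 3^d * (u * discrepancy d N x) / (2*s)^d) * ((2*s)^d * v)
          = (1 + 1/(N:ℝ))^d * ((2*s)^d * v) + 3^d*((u*v) * discrepancy d N x) := by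
            field_simp
        _ = (N:ℝ)^2 * ((2*R) * (1 + 1/(N:ℝ)))^d + 3^d*((N:ℝ)^2 * discrepancy d N x) := by
            rw [eN2, ← hQ, mul_div_assoc, ← hRdef, mul_pow (2*R) (1 + 1/(N:ℝ)) d]
            ring
    calc (pairCount d x N R : ℝ)
        ≤ (N:ℝ)^2*(2*R + 2*(R/N))^d + 3^d*((N:ℝ)^2 * discrepancy d N x) := hPup
      _ = ((1 + 1/(N:ℝ))^d + 3^d * (u * discrepancy d N x) / (2*s)^d) *
          ((N:ℝ)^2 * (2 * s / (N:ℝ)^α)^d) := hhiQ.symm
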